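/- Let B = (M₁, F₁) be a complete deterministic Büchi acceptor and U = (M₂, 𝓕) a complete deterministic Muller acceptor over the same finite alphabet, both with finite state sets. Then ⟦B⟧ ⊆ ⟦U⟧ if and only if there is no reachable SCC C of the product automaton M₁ × M₂ such that π₁(C) ∩ F₁ ≠ ∅ and π₂(C) ∉ 𝓕. -/

import Mathlib

open Filter

/-- Extended transition function: `dstar δ q x` is the state reached from `q` reading `x`. -/
def dstar {Q A : Type*} (δ : Q → A → Q) (q : Q) (x : List A) : Q := x.foldl δ q

/-- The run of a deterministic automaton on an ω-word from state `q`. -/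
def run {Q A : Type*} (δ : Q → A → Q) (q : Q) (w : ℕ → A) : ℕ → Q
  | 0 => q
  | n + 1 => δ (run δ q w n) (w n)

/-- The set of states visited infinitely often by the run on `w` from `q`. -/
def infOcc {Q A : Type*} (δ : Q → A → Q) (q : Q) (w : ℕ → A) : Set Q :=
  {p | ∃ᶠ n in atTop, run δ q w n = p}

/-- `C` is a strongly connected component of the automaton with transitions `δ`. -/
def IsSCC {Q A : Type*} (δ : Q → A → Q) (C : Set Q) : Prop :=
  C.Nonempty ∧ ∀ q₁ ∈ C, ∀ q₂ ∈ C, ∃ x : List A, x ≠ [] ∧ dstar δ q₁ x = q₂ ∧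
    ∀ x', x' <+: x → dstar δ q₁ x' ∈ C

/-- `q` is reachable from the initial state `qι`. -/
def Reachable {Q A : Type*} (δ : Q → A → Q) (qι q : Q) : Prop :=
  ∃ x : List A, dstar δ qι x = q

/-- The ultimately periodic ω-word `u(v)^ω`. -/
def upWord {A : Type*} (u v : List A) (hv : v ≠ []) : ℕ → A := fun n =>
  if h : n < u.length then u[n]
  else v[(n - u.length) % v.length]'(Nat.mod_lt _ (List.length_pos_iff.mpr hv))

/-- The transition function of the product automaton. -/
def prodStep {Q₁ Q₂ A : Type*} (δ₁ : Q₁ → A → Q₁) (δ₂ : Q₂ → A → Q₂) :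
    Q₁ × Q₂ → A → Q₁ × Q₂ := fun p a => (δ₁ p.1 a, δ₂ p.2 a)

/-- The ω-word `x·z` obtained by prepending the finite word `x` to `z`. -/
def prepend {A : Type*} (x : List A) (z : ℕ → A) : ℕ → A := fun n =>
  if h : n < x.length then x[n] else z (n - x.length)


section Aux
variable {Q A : Type*} (δ : Q → A → Q)

lemma dstar_append (q : Q) (x y : List A) : dstar δ q (x ++ y) = dstar δ (dstar δ q x) y :=
  List.foldl_append ..

/-- The shifted ω-word. -/
def shiftW {A : Type*} (w : ℕ → A) (m : ℕ) : ℕ → A := fun n => w (m + n)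

lemma run_add (q : Q) (w : ℕ → A) (m n : ℕ) :
    run δ q w (m + n) = run δ (run δ q w m) (shiftW w m) n := by
  induction n with
  | zero => rfl
  | succ n ih => show run δ q w (m + n + 1) = _; simp [run, ih, shiftW]

lemma dstar_range (q : Q) (w : ℕ → A) (n : ℕ) :
    dstar δ q ((List.range n).map w) = run δ q w n := by
  induction n with
  | zero => rfl
  | succ n ih => rw [List.range_succ, List.map_append, dstar_append, ih]; rfl

lemma take_range_map (w : ℕ → A) (k n : ℕ) (h : k ≤ n) :
    ((List.range n).map w).take k = (List.range k).map w := by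
  rw [← List.map_take, List.take_range, Nat.min_eq_left h]

lemma range_map_eq_take (w : ℕ → A) (v : List A) (r : ℕ) (hr : r ≤ v.length)
    (hw : ∀ i (h : i < r), w i = v[i]'(lt_of_lt_of_le h hr)) :
    (List.range r).map w = v.take r := by
  apply List.ext_getElem
  · simp [hr]
  · intro i h1 h2
    simp only [List.getElem_map, List.getElem_range, List.getElem_take]
    simp at h1
    exact hw i h1

lemma run_prepend (q : Q) (x : List A) (z : ℕ → A) (n : ℕ) :
    run δ q (prepend x z) (x.length + n) = run δ (dstar δ q x) z n := by
  rw [run_add]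
  congr 1
  · rw [← dstar_range δ q (prepend x z) x.length]
    congr 1
    have h := range_map_eq_take (prepend x z) x x.length le_rfl (fun i h => by simp [prepend, h])
    rwa [List.take_length] at h
  · funext n
    simp [shiftW, prepend]

lemma infOcc_shift_aux {P : ℕ → Prop} (m : ℕ) :
    (∃ᶠ n in atTop, P (m + n)) ↔ ∃ᶠ n in atTop, P n := by
  rw [frequently_atTop, frequently_atTop]
  constructor
  · intro h N
    obtain ⟨n, hn, hp⟩ := h N
    exact ⟨m + n, le_trans hn (Nat.le_add_left _ _), hp⟩
  · intro h N
    obtain ⟨n, hn, hp⟩ := h (N + m)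
    refine ⟨n - m, by omega, ?_⟩
    rwa [show m + (n - m) = n by omega]

lemma infOcc_prepend (q : Q) (x : List A) (z : ℕ → A) :
    infOcc δ q (prepend x z) = infOcc δ (dstar δ q x) z := by
  ext p
  show (∃ᶠ n in atTop, _) ↔ (∃ᶠ n in atTop, _)
  rw [← infOcc_shift_aux (P := fun n => run δ q (prepend x z) n = p) x.length]
  exact frequently_congr (Eventually.of_forall fun n => by rw [run_prepend])

/-- The purely periodic word `v^ω`. -/
def perW {A : Type*} (v : List A) (hv : v ≠ []) : ℕ → A := fun n =>
  v[n % v.length]'(Nat.mod_lt _ (List.length_pos_iff.mpr hv))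

variable {v : List A} (hv : v ≠ []) (p : Q) (hcyc : dstar δ p v = p)

lemma run_perW_le (r : ℕ) (hr : r ≤ v.length) :
    run δ p (perW v hv) r = dstar δ p (v.take r) := by
  rw [← dstar_range]
  congr 1
  refine range_map_eq_take _ _ _ hr ?_
  intro i h
  simp only [perW]
  congr 1
  exact Nat.mod_eq_of_lt (lt_of_lt_of_le h hr)

lemma shiftW_perW : shiftW (perW v hv) v.length = perW v hv := by
  funext n
  simp [shiftW, perW, Nat.add_mod_left]

include hcyc in
lemma run_perW (k r : ℕ) (hr : r ≤ v.length) :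
    run δ p (perW v hv) (k * v.length + r) = dstar δ p (v.take r) := by
  induction k with
  | zero => simpa using run_perW_le δ hv p r hr
  | succ k ih =>
    have : (k + 1) * v.length + r = v.length + (k * v.length + r) := by ring
    rw [this, run_add, run_perW_le δ hv p v.length le_rfl, List.take_length, hcyc,
      shiftW_perW, ih]

include hcyc in
lemma infOcc_perW :
    infOcc δ p (perW v hv) = {s | ∃ r < v.length, dstar δ p (v.take r) = s} := by
  have hL : 0 < v.length := List.length_pos_iff.mpr hv
  ext s
  constructor
  · intro hs
    obtain ⟨n, -, hn⟩ := Filter.frequently_atTop.1 hs 0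
    refine ⟨n % v.length, Nat.mod_lt _ hL, ?_⟩
    rw [← hn, ← run_perW δ hv p hcyc (n / v.length) (n % v.length) (le_of_lt (Nat.mod_lt _ hL))]
    rw [Nat.div_add_mod']
  · rintro ⟨r, hr, rfl⟩
    refine Filter.frequently_atTop.2 fun N =>
      ⟨N * v.length + r, ?_, run_perW δ hv p hcyc N r (le_of_lt hr)⟩
    calc N ≤ N * v.length := Nat.le_mul_of_pos_right _ hL
    _ ≤ N * v.length + r := Nat.le_add_right _ _
end Aux

section Fin
variable {Q A : Type*} (δ : Q → A → Q) [Fintype Q]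

lemma infOcc_nonempty (q : Q) (w : ℕ → A) : (infOcc δ q w).Nonempty := by
  obtain ⟨p, hp⟩ := Finite.exists_infinite_fiber (run δ q w)
  exact ⟨p, Nat.frequently_atTop_iff_infinite.2 (Set.infinite_coe_iff.1 hp)⟩

lemma eventually_mem_infOcc (q : Q) (w : ℕ → A) :
    ∀ᶠ n in atTop, run δ q w n ∈ infOcc δ q w := by
  have h : ∀ p ∈ (infOcc δ q w)ᶜ, ∀ᶠ n in atTop, run δ q w n ≠ p := by
    intro p hp
    simpa using Filter.not_frequently.1 hp
  have := (Filter.eventually_all_finite (Set.toFinite (infOcc δ q w)ᶜ)).2 h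
  filter_upwards [this] with n hn
  by_contra hc
  exact hn _ hc rfl

lemma infOcc_isSCC (q : Q) (w : ℕ → A) : IsSCC δ (infOcc δ q w) := by
  refine ⟨infOcc_nonempty δ q w, ?_⟩
  intro p₁ hp₁ p₂ hp₂
  obtain ⟨N, hN⟩ := Filter.eventually_atTop.1 (eventually_mem_infOcc δ q w)
  obtain ⟨m, hm, hm1⟩ := Filter.frequently_atTop.1 hp₁ N
  obtain ⟨n, hn, hn2⟩ := Filter.frequently_atTop.1 hp₂ (m + 1)
  refine ⟨(List.range (n - m)).map (shiftW w m), ?_, ?_, ?_⟩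
  · simp [List.range_eq_nil]; omega
  · rw [← hm1, dstar_range, ← run_add, show m + (n - m) = n by omega, hn2]
  · intro x' hx'
    have hk := hx'.length_le
    rw [List.length_map, List.length_range] at hk
    rw [List.prefix_iff_eq_take.1 hx', take_range_map _ _ _ hk, ← hm1, dstar_range, ← run_add]
    exact hN _ (by omega)

omit [Fintype Q] in
lemma infOcc_reachable (q : Q) (w : ℕ → A) (p : Q) (hp : p ∈ infOcc δ q w) :
    Reachable δ q p := by
  obtain ⟨n, -, hn⟩ := Filter.frequently_atTop.1 hp 0
  exact ⟨(List.range n).map w, by rw [dstar_range, hn]⟩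
end Fin

section Prod
variable {Q₁ Q₂ A : Type*} (δ₁ : Q₁ → A → Q₁) (δ₂ : Q₂ → A → Q₂)

lemma run_prod (q₁ : Q₁) (q₂ : Q₂) (w : ℕ → A) (n : ℕ) :
    run (prodStep δ₁ δ₂) (q₁, q₂) w n = (run δ₁ q₁ w n, run δ₂ q₂ w n) := by
  induction n with
  | zero => rfl
  | succ n ih => simp [run, ih, prodStep]

lemma infOcc_fst [Fintype Q₂] (q₁ : Q₁) (q₂ : Q₂) (w : ℕ → A) :
    Prod.fst '' infOcc (prodStep δ₁ δ₂) (q₁, q₂) w = infOcc δ₁ q₁ w := by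
  ext p
  constructor
  · rintro ⟨⟨p1, p2⟩, hp, rfl⟩
    refine hp.mono fun n hn => ?_
    rw [run_prod] at hn
    exact congrArg Prod.fst hn
  · intro hp
    have hinf : {n | run δ₁ q₁ w n = p}.Infinite := Nat.frequently_atTop_iff_infinite.1 hp
    set f : {n | run δ₁ q₁ w n = p} → Q₂ := fun n => run δ₂ q₂ w n.1 with hf
    haveI : Infinite {n | run δ₁ q₁ w n = p} := Set.infinite_coe_iff.2 hinf
    obtain ⟨p2, hp2⟩ := Finite.exists_infinite_fiber f
    refine ⟨(p, p2), ?_, rfl⟩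
    have : {n | run (prodStep δ₁ δ₂) (q₁, q₂) w n = (p, p2)}.Infinite := by
      have hi : Set.InjOn Subtype.val (f ⁻¹' {p2}) := Subtype.val_injective.injOn
      refine ((Set.infinite_coe_iff.1 hp2).image hi).mono ?_
      rintro n ⟨⟨m, hm⟩, hm2, rfl⟩
      simp only [Set.mem_preimage, Set.mem_singleton_iff, hf] at hm2
      simp [Set.mem_setOf_eq, run_prod, hm, hm2]
      exact hm
    exact Nat.frequently_atTop_iff_infinite.2 this

lemma infOcc_snd [Fintype Q₁] (q₁ : Q₁) (q₂ : Q₂) (w : ℕ → A) :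
    Prod.snd '' infOcc (prodStep δ₁ δ₂) (q₁, q₂) w = infOcc δ₂ q₂ w := by
  ext p
  constructor
  · rintro ⟨⟨p1, p2⟩, hp, rfl⟩
    refine hp.mono fun n hn => ?_
    rw [run_prod] at hn
    exact congrArg Prod.snd hn
  · intro hp
    have hinf : {n | run δ₂ q₂ w n = p}.Infinite := Nat.frequently_atTop_iff_infinite.1 hp
    set f : {n | run δ₂ q₂ w n = p} → Q₁ := fun n => run δ₁ q₁ w n.1 with hf
    haveI : Infinite {n | run δ₂ q₂ w n = p} := Set.infinite_coe_iff.2 hinf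
    obtain ⟨p1, hp1⟩ := Finite.exists_infinite_fiber f
    refine ⟨(p1, p), ?_, rfl⟩
    have : {n | run (prodStep δ₁ δ₂) (q₁, q₂) w n = (p1, p)}.Infinite := by
      have hi : Set.InjOn Subtype.val (f ⁻¹' {p1}) := Subtype.val_injective.injOn
      refine ((Set.infinite_coe_iff.1 hp1).image hi).mono ?_
      rintro n ⟨⟨m, hm⟩, hm2, rfl⟩
      simp only [Set.mem_preimage, Set.mem_singleton_iff, hf] at hm2
      simp [Set.mem_setOf_eq, run_prod, hm, hm2]
      exact hm
    exact Nat.frequently_atTop_iff_infinite.2 this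
end Prod

section Cycles
variable {Q A : Type*} (δ : Q → A → Q)

/-- `v` is a cycle at `p` staying inside `C`. -/
def Cyc (C : Set Q) (p : Q) (v : List A) : Prop :=
  dstar δ p v = p ∧ ∀ r, dstar δ p (v.take r) ∈ C

/-- `v` read from `p` visits `c` strictly before its end. -/
def Vis (p : Q) (v : List A) (c : Q) : Prop :=
  ∃ r < v.length, dstar δ p (v.take r) = c

variable {δ} {C : Set Q} {p : Q}

lemma cyc_append {v₁ v₂ : List A} (h1 : Cyc δ C p v₁) (h2 : Cyc δ C p v₂) :
    Cyc δ C p (v₁ ++ v₂) := by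
  refine ⟨by rw [dstar_append, h1.1, h2.1], fun r => ?_⟩
  rcases le_or_gt r v₁.length with h | h
  · rw [List.take_append_of_le_length h]; exact h1.2 r
  · rw [List.take_append, List.take_of_length_le (by omega), dstar_append, h1.1]
    exact h2.2 _

lemma vis_append_left {v₁ v₂ : List A} {c : Q} (h : Vis δ p v₁ c) : Vis δ p (v₁ ++ v₂) c := by
  obtain ⟨r, hr, hd⟩ := h
  exact ⟨r, by simp; omega, by rwa [List.take_append_of_le_length (le_of_lt hr)]⟩

lemma vis_append_right {v₁ v₂ : List A} {c : Q} (h1 : dstar δ p v₁ = p) (h : Vis δ p v₂ c) :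
    Vis δ p (v₁ ++ v₂) c := by
  obtain ⟨r, hr, hd⟩ := h
  refine ⟨v₁.length + r, by simp; omega, ?_⟩
  rw [List.take_append, List.take_of_length_le (by omega),
    Nat.add_sub_cancel_left, dstar_append, h1, hd]

lemma exists_cycle (hC : IsSCC δ C) (hp : p ∈ C) (L : List Q) (hL : ∀ c ∈ L, c ∈ C) :
    ∃ v : List A, v ≠ [] ∧ Cyc δ C p v ∧ ∀ c ∈ L, Vis δ p v c := by
  induction L with
  | nil =>
    obtain ⟨x, hx, hxd, hxp⟩ := hC.2 p hp p hp
    refine ⟨x, hx, ⟨hxd, fun r => hxp _ (List.take_prefix r x)⟩, by simp⟩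
  | cons c L ih =>
    obtain ⟨v', hv', hcyc', hvis'⟩ := ih (fun d hd => hL d (List.mem_cons_of_mem _ hd))
    have hc : c ∈ C := hL c (List.mem_cons_self)
    obtain ⟨x, hx, hxd, hxp⟩ := hC.2 p hp c hc
    obtain ⟨y, hy, hyd, hyp⟩ := hC.2 c hc p hp
    have hpiece : Cyc δ C p (x ++ y) := by
      refine ⟨by rw [dstar_append, hxd, hyd], fun r => ?_⟩
      rcases le_or_gt r x.length with h | h
      · rw [List.take_append_of_le_length h]
        exact hxp _ (List.take_prefix r x)
      · rw [List.take_append, List.take_of_length_le (by omega),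
          dstar_append, hxd]
        exact hyp _ (List.take_prefix _ y)
    refine ⟨(x ++ y) ++ v', by simp [hx], cyc_append hpiece hcyc', ?_⟩
    intro d hd
    rcases List.mem_cons.1 hd with rfl | hd
    · apply vis_append_left
      refine ⟨x.length, ?_, ?_⟩
      · simp [List.length_pos_iff.2 hy]
      · rw [List.take_append_of_le_length le_rfl, List.take_length, hxd]
    · exact vis_append_right hpiece.1 (hvis' d hd)

lemma exists_full_cycle [Fintype Q] (hC : IsSCC δ C) (hp : p ∈ C) :
    ∃ v : List A, v ≠ [] ∧ dstar δ p v = p ∧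
      {s | ∃ r < v.length, dstar δ p (v.take r) = s} = C := by
  obtain ⟨v, hv, hcyc, hvis⟩ := exists_cycle hC hp (Set.toFinite C).toFinset.toList
    (fun c hc => (Set.Finite.mem_toFinset _).1 (Finset.mem_toList.1 hc))
  refine ⟨v, hv, hcyc.1, Set.Subset.antisymm ?_ ?_⟩
  · rintro s ⟨r, hr, rfl⟩
    exact hcyc.2 r
  · intro c hc
    exact hvis c (Finset.mem_toList.2 ((Set.Finite.mem_toFinset _).2 hc))
end Cycles

/-- Inclusion of a DBA in a DMA holds iff there is no reachable SCC `C` of the product with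
`π₁ C ∩ F₁ ≠ ∅` and `π₂ C ∉ 𝓕`. -/
theorem stmt16 {A Q₁ Q₂ : Type*} [Fintype A] [Fintype Q₁] [Fintype Q₂]
    (δ₁ : Q₁ → A → Q₁) (q₁ : Q₁) (F₁ : Set Q₁)
    (δ₂ : Q₂ → A → Q₂) (q₂ : Q₂) (𝓕 : Set (Set Q₂)) :
    {w : ℕ → A | (infOcc δ₁ q₁ w ∩ F₁).Nonempty} ⊆ {w | infOcc δ₂ q₂ w ∈ 𝓕} ↔
      ¬ ∃ C : Set (Q₁ × Q₂), IsSCC (prodStep δ₁ δ₂) C ∧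
        (∀ p ∈ C, Reachable (prodStep δ₁ δ₂) (q₁, q₂) p) ∧
        (Prod.fst '' C ∩ F₁).Nonempty ∧ Prod.snd '' C ∉ 𝓕 := by
  constructor
  · intro hinc
    rintro ⟨C, hSCC, hreach, ⟨f, ⟨pp, hppC, hpp1⟩, hfF⟩, hno⟩
    obtain ⟨v, hv, hcyc, hS⟩ := exists_full_cycle hSCC hppC
    obtain ⟨u, hu⟩ := hreach pp hppC
    set w := prepend u (perW v hv) with hw
    have hIO : infOcc (prodStep δ₁ δ₂) (q₁, q₂) w = C := by
      rw [hw, infOcc_prepend, hu, infOcc_perW _ hv pp hcyc, hS]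
    have h1 : infOcc δ₁ q₁ w = Prod.fst '' C := by rw [← infOcc_fst δ₁ δ₂ q₁ q₂ w, hIO]
    have h2 : infOcc δ₂ q₂ w = Prod.snd '' C := by rw [← infOcc_snd δ₁ δ₂ q₁ q₂ w, hIO]
    have hwB : w ∈ {w : ℕ → A | (infOcc δ₁ q₁ w ∩ F₁).Nonempty} :=
      ⟨f, by rw [h1]; exact ⟨pp, hppC, hpp1⟩, hfF⟩
    have hU := hinc hwB
    rw [Set.mem_setOf_eq, h2] at hU
    exact hno hU
  · intro hno w hw
    set C := infOcc (prodStep δ₁ δ₂) (q₁, q₂) w with hC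
    have h1 : Prod.fst '' C = infOcc δ₁ q₁ w := infOcc_fst δ₁ δ₂ q₁ q₂ w
    have h2 : Prod.snd '' C = infOcc δ₂ q₂ w := infOcc_snd δ₁ δ₂ q₁ q₂ w
    by_contra hcon
    exact hno ⟨C, infOcc_isSCC _ _ _, fun p hp => infOcc_reachable _ _ _ p hp,
      by rw [h1]; exact hw, by rw [h2]; exact hcon⟩
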